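/- arXiv:1108.1093 — 2 statements merged into one kernel-verified Lean document; each statement's English description precedes it below -/
import Mathlib

section
/- Let h0, h1 be orientation-preserving circle diffeomorphisms, each with a unique hyperbolic attracting fixed point p0, p1 respectively, such that h0 and h1 are affine contractions on an interval [p0, p1] with derivatives λ0 = h0'(p0), λ1 = h1'(p1) satisfying 1/2 < λ0, λ1 < 1. Then for any nonempty open subinterval J ⊆ [p0,p1], the union of the images of J under all finite compositions of h0 and h1 is dense in [p0,p1]; i.e., the iterated function system generated by h0, h1 is minimal on [p0,p1]. -/
/-- Application of a finite word in the two generators: `wordComp h [a₁, …, a_k] = h_{a₁} ∘ ⋯ ∘ h_{a_k}`. -/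
def wordComp {X : Type*} (h : Fin 2 → X → X) : List (Fin 2) → X → X
  | [], x => x
  | a :: w, x => h a (wordComp h w x)

/-- Minimality of the iterated function system generated by two affine contractions on
`[p₀,p₁]`: if `h₀, h₁` are affine on `[p₀,p₁]` with `h₀(x) = p₀ + λ₀(x-p₀)`,
`h₁(x) = p₁ + λ₁(x-p₁)` and slopes `λ₀, λ₁ ∈ (1/2, 1)`, then for every nonempty open
subinterval `J = (a,b) ⊆ [p₀,p₁]` the union of the images of `J` under all finite
compositions of `h₀` and `h₁` is dense in `[p₀,p₁]`. -/
theorem ifs_two_affine_contractions_minimal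
    (p₀ p₁ : ℝ) (hp : p₀ < p₁) (l₀ l₁ : ℝ)
    (hl₀ : 1 / 2 < l₀ ∧ l₀ < 1) (hl₁ : 1 / 2 < l₁ ∧ l₁ < 1)
    (h : Fin 2 → ℝ → ℝ)
    (haff₀ : ∀ x ∈ Set.Icc p₀ p₁, h 0 x = p₀ + l₀ * (x - p₀))
    (haff₁ : ∀ x ∈ Set.Icc p₀ p₁, h 1 x = p₁ + l₁ * (x - p₁)) :
    ∀ a b : ℝ, p₀ ≤ a → a < b → b ≤ p₁ →
      Set.Icc p₀ p₁ ⊆ closure (⋃ w : List (Fin 2), wordComp h w '' Set.Ioo a b) := by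
  obtain ⟨hl₀a, hl₀b⟩ := hl₀
  obtain ⟨hl₁a, hl₁b⟩ := hl₁
  intro a b hpa hab hbp
  set L := max l₀ l₁ with hLdef
  have hl₀pos : (0:ℝ) < l₀ := by linarith
  have hl₁pos : (0:ℝ) < l₁ := by linarith
  have hL0 : 0 < L := lt_max_of_lt_left hl₀pos
  have hL1 : L < 1 := max_lt hl₀b hl₁b
  have hl₀L : l₀ ≤ L := le_max_left _ _
  have hl₁L : l₁ ≤ L := le_max_right _ _
  -- key lemma: words map Icc to Icc and are contractions with ratio L^length
  have key : ∀ w : List (Fin 2), ∀ x ∈ Set.Icc p₀ p₁,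
      wordComp h w x ∈ Set.Icc p₀ p₁ ∧
      ∀ y ∈ Set.Icc p₀ p₁, |wordComp h w x - wordComp h w y| ≤ L ^ w.length * |x - y| := by
    intro w
    induction w with
    | nil =>
      intro x hx
      exact ⟨hx, fun y hy => by simp [wordComp]⟩
    | cons c w ih =>
      intro x hx
      obtain ⟨hX, hlipX⟩ := ih x hx
      obtain ⟨hX1, hX2⟩ := hX
      constructor
      · show h c (wordComp h w x) ∈ Set.Icc p₀ p₁
        fin_cases c
        · show h 0 (wordComp h w x) ∈ Set.Icc p₀ p₁
          rw [haff₀ _ ⟨hX1, hX2⟩]; constructor <;> nlinarith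
        · show h 1 (wordComp h w x) ∈ Set.Icc p₀ p₁
          rw [haff₁ _ ⟨hX1, hX2⟩]; constructor <;> nlinarith
      · intro y hy
        obtain ⟨hY, _⟩ := ih y hy
        show |h c (wordComp h w x) - h c (wordComp h w y)| ≤ L ^ (c :: w).length * |x - y|
        have hle := hlipX y hy
        have hpow : (0:ℝ) < L ^ w.length := pow_pos hL0 _
        fin_cases c
        · show |h 0 (wordComp h w x) - h 0 (wordComp h w y)| ≤ L ^ ((0:Fin 2) :: w).length * |x - y|
          rw [haff₀ _ ⟨hX1, hX2⟩, haff₀ _ hY]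
          have heq : p₀ + l₀ * (wordComp h w x - p₀) - (p₀ + l₀ * (wordComp h w y - p₀))
              = l₀ * (wordComp h w x - wordComp h w y) := by ring
          rw [heq, abs_mul, abs_of_pos hl₀pos, List.length_cons, pow_succ]
          nlinarith [abs_nonneg (wordComp h w x - wordComp h w y), abs_nonneg (x - y)]
        · show |h 1 (wordComp h w x) - h 1 (wordComp h w y)| ≤ L ^ ((1:Fin 2) :: w).length * |x - y|
          rw [haff₁ _ ⟨hX1, hX2⟩, haff₁ _ hY]
          have heq : p₁ + l₁ * (wordComp h w x - p₁) - (p₁ + l₁ * (wordComp h w y - p₁))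
              = l₁ * (wordComp h w x - wordComp h w y) := by ring
          rw [heq, abs_mul, abs_of_pos hl₁pos, List.length_cons, pow_succ]
          nlinarith [abs_nonneg (wordComp h w x - wordComp h w y), abs_nonneg (x - y)]
  -- covering lemma: every point is hit by a word of any prescribed length
  have cover : ∀ n : ℕ, ∀ z ∈ Set.Icc p₀ p₁, ∃ w : List (Fin 2), w.length = n ∧
      ∃ y ∈ Set.Icc p₀ p₁, wordComp h w y = z := by
    intro n
    induction n with
    | zero => intro z hz; exact ⟨[], rfl, z, hz, rfl⟩
    | succ n ih =>
      intro z hz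
      obtain ⟨hz1, hz2⟩ := hz
      by_cases hcase : z ≤ p₀ + l₀ * (p₁ - p₀)
      · have hz'mem : p₀ + (z - p₀) / l₀ ∈ Set.Icc p₀ p₁ := by
          constructor
          · have : 0 ≤ (z - p₀) / l₀ := div_nonneg (by linarith) hl₀pos.le
            linarith
          · have : (z - p₀) / l₀ ≤ p₁ - p₀ := by
              rw [div_le_iff₀ hl₀pos]; nlinarith
            linarith
        obtain ⟨w, hwlen, y, hy, hwy⟩ := ih _ hz'mem
        refine ⟨0 :: w, by simp [hwlen], y, hy, ?_⟩
        show h 0 (wordComp h w y) = z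
        rw [hwy, haff₀ _ hz'mem]
        field_simp
        ring
      · have hz'mem : p₁ + (z - p₁) / l₁ ∈ Set.Icc p₀ p₁ := by
          constructor
          · have : p₀ - p₁ ≤ (z - p₁) / l₁ := by
              rw [le_div_iff₀ hl₁pos]; nlinarith
            linarith
          · have : (z - p₁) / l₁ ≤ 0 :=
              div_nonpos_of_nonpos_of_nonneg (by linarith) hl₁pos.le
            linarith
        obtain ⟨w, hwlen, y, hy, hwy⟩ := ih _ hz'mem
        refine ⟨1 :: w, by simp [hwlen], y, hy, ?_⟩
        show h 1 (wordComp h w y) = z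
        rw [hwy, haff₁ _ hz'mem]
        field_simp
        ring
  -- main argument
  intro z hz
  rw [Metric.mem_closure_iff]
  intro ε hε
  have hd : (0:ℝ) < p₁ - p₀ := by linarith
  obtain ⟨n, hn⟩ := exists_pow_lt_of_lt_one (div_pos hε hd) hL1
  obtain ⟨w, hwlen, y, hy, hwy⟩ := cover n z hz
  set x := (a + b) / 2 with hxdef
  have hxIoo : x ∈ Set.Ioo a b := ⟨by linarith, by linarith⟩
  have hxIcc : x ∈ Set.Icc p₀ p₁ := ⟨by linarith, by linarith⟩
  refine ⟨wordComp h w x, Set.mem_iUnion.mpr ⟨w, Set.mem_image_of_mem _ hxIoo⟩, ?_⟩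
  have hlip := (key w y hy).2 x hxIcc
  rw [hwlen] at hlip
  have hyx : |y - x| ≤ p₁ - p₀ := by
    rw [abs_sub_le_iff]
    constructor <;> (obtain ⟨hy1, hy2⟩ := hy; linarith)
  have hpown : (0:ℝ) < L ^ n := pow_pos hL0 _
  have hfin : L ^ n * |y - x| < ε := by
    have h1 : L ^ n * (p₁ - p₀) < ε := (lt_div_iff₀ hd).mp hn
    nlinarith [abs_nonneg (y - x)]
  rw [Real.dist_eq, ← hwy]
  linarith [hlip, hfin]
end

section
/- Let h0, h1: [0,1] → [0,1] be affine contractions h0(x) = λ0 x and h1(x) = λ1 x + (1 - λ1) with λ0 + λ1 > 1 and λ0, λ1 ∈ (0,1). Then for any nonempty open interval J ⊆ [0,1] there exists k ∈ N such that the union over all words ω ∈ {0,1}^k of h_{ω_k} ∘ ⋯ ∘ h_{ω_1}(J) is ε-dense in [0,1] for any given ε > 0 (for k large enough depending on ε). -/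
/-- For the affine contractions `h₀(x) = λ₀ x` and `h₁(x) = λ₁ x + (1 - λ₁)` on `[0,1]`
with `λ₀ + λ₁ > 1` and `λ₀, λ₁ ∈ (0,1)`, the iterates `L^k(J)` of any nonempty open
interval `J = (a,b) ⊆ [0,1]` under the set map `L(S) = h₀(S) ∪ h₁(S)` become `ε`-dense
in `[0,1]`: for every `ε > 0` there is `k` such that every point of `[0,1]` is within
`ε` of `L^k(J)`. -/
theorem ifs_expanding_total_length_eps_dense
    (l₀ l₁ : ℝ) (hl₀ : l₀ ∈ Set.Ioo (0:ℝ) 1) (hl₁ : l₁ ∈ Set.Ioo (0:ℝ) 1)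
    (hsum : 1 < l₀ + l₁)
    (h₀ h₁ : ℝ → ℝ) (hh₀ : ∀ x, h₀ x = l₀ * x) (hh₁ : ∀ x, h₁ x = l₁ * x + (1 - l₁))
    (L : Set ℝ → Set ℝ) (hL : ∀ S, L S = h₀ '' S ∪ h₁ '' S)
    (a b : ℝ) (hab : a < b) (hJ : Set.Ioo a b ⊆ Set.Icc (0:ℝ) 1) :
    ∀ ε > (0:ℝ), ∃ k : ℕ, ∀ x ∈ Set.Icc (0:ℝ) 1,
      ∃ y ∈ L^[k] (Set.Ioo a b), |x - y| < ε := by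
  obtain ⟨hl₀0, hl₀1⟩ := hl₀
  obtain ⟨hl₁0, hl₁1⟩ := hl₁
  set lam : ℝ := max l₀ l₁ with hlam
  have hlam0 : 0 < lam := lt_of_lt_of_le hl₀0 (le_max_left _ _)
  have hlam1 : lam < 1 := max_lt hl₀1 hl₁1
  -- key density lemma by induction
  have key : ∀ k : ℕ, ∀ x ∈ Set.Icc (0:ℝ) 1,
      ∃ y ∈ L^[k] (Set.Ioo a b), |x - y| < 2 * lam ^ k := by
    intro k
    induction k with
    | zero =>
      intro x hx
      refine ⟨(a + b) / 2, ?_, ?_⟩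
      · simp only [Function.iterate_zero, id_eq]
        constructor <;> linarith
      · have hy : (a + b) / 2 ∈ Set.Icc (0:ℝ) 1 := hJ ⟨by linarith, by linarith⟩
        have h1 := hx.1; have h2 := hx.2
        have h3 := hy.1; have h4 := hy.2
        rw [abs_sub_lt_iff]
        simp only [pow_zero, mul_one]
        constructor <;> linarith
    | succ k ih =>
      intro x hx
      rw [Function.iterate_succ_apply', hL]
      by_cases hc : x ≤ l₀
      · -- use h₀
        have hx' : x / l₀ ∈ Set.Icc (0:ℝ) 1 := by
          constructor
          · exact div_nonneg hx.1 hl₀0.le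
          · rw [div_le_one hl₀0]; exact hc
        obtain ⟨y, hy, hdy⟩ := ih (x / l₀) hx'
        refine ⟨h₀ y, Or.inl ⟨y, hy, rfl⟩, ?_⟩
        rw [hh₀]
        have : x - l₀ * y = l₀ * (x / l₀ - y) := by field_simp
        rw [this, abs_mul, abs_of_pos hl₀0]
        calc l₀ * |x / l₀ - y| < l₀ * (2 * lam ^ k) := by
              exact mul_lt_mul_of_pos_left hdy hl₀0
          _ ≤ lam * (2 * lam ^ k) := by
              apply mul_le_mul_of_nonneg_right (le_max_left _ _)
              positivity
          _ = 2 * lam ^ (k + 1) := by ring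
      · -- use h₁; here x > l₀ ≥ 1 - l₁
        push_neg at hc
        have hge : 1 - l₁ ≤ x := by linarith
        have hx' : (x - (1 - l₁)) / l₁ ∈ Set.Icc (0:ℝ) 1 := by
          constructor
          · apply div_nonneg _ hl₁0.le; linarith
          · rw [div_le_one hl₁0]; have := hx.2; linarith
        obtain ⟨y, hy, hdy⟩ := ih _ hx'
        refine ⟨h₁ y, Or.inr ⟨y, hy, rfl⟩, ?_⟩
        rw [hh₁]
        have : x - (l₁ * y + (1 - l₁)) = l₁ * ((x - (1 - l₁)) / l₁ - y) := by
          field_simp; ring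
        rw [this, abs_mul, abs_of_pos hl₁0]
        calc l₁ * |(x - (1 - l₁)) / l₁ - y| < l₁ * (2 * lam ^ k) := by
              exact mul_lt_mul_of_pos_left hdy hl₁0
          _ ≤ lam * (2 * lam ^ k) := by
              apply mul_le_mul_of_nonneg_right (le_max_right _ _)
              positivity
          _ = 2 * lam ^ (k + 1) := by ring
  intro ε hε
  obtain ⟨k, hk⟩ := exists_pow_lt_of_lt_one (by positivity : (0:ℝ) < ε / 2) hlam1
  refine ⟨k, fun x hx => ?_⟩
  obtain ⟨y, hy, hdy⟩ := key k x hx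
  exact ⟨y, hy, by nlinarith [pow_nonneg hlam0.le k]⟩
end
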